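/- Let n ≥ 1 and let L : ℝⁿ → ℝ be three times continuously differentiable. Fix w ∈ ℝⁿ and let p, q ∈ [1, ∞] with 1/p + 1/q = 1. Define g ∈ ℝⁿ by gᵢ = (∂L/∂wᵢ)(w) · |wᵢ|. If g ≠ 0, then lim_{ρ → 0⁺} (1/ρ) · sup { L(w + γ ⊙ |w|) − L(w) : ‖γ‖_p ≤ ρ } = ‖g‖_q. -/

import Mathlib

open scoped ENNReal NNReal
open Filter

namespace AdaptiveAux

lemma sign_mul_self (x : ℝ) : Real.sign x * x = |x| := by
  rcases lt_trichotomy x 0 with h | h | h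
  · rw [Real.sign_of_neg h, abs_of_neg h]; ring
  · simp [h]
  · rw [Real.sign_of_pos h, abs_of_pos h]; ring

lemma abs_sign_le (x : ℝ) : |Real.sign x| ≤ 1 := by
  rcases Real.sign_apply_eq x with h | h | h <;> simp [h]

/-- Hölder + extremizer for finite-dimensional `ℓ^p`-`ℓ^q` duality. -/
lemma holder_pair (n : ℕ) (hn : 1 ≤ n) (p q : ℝ≥0∞) [Fact (1 ≤ p)] [Fact (1 ≤ q)]
    (hpq : 1 / p + 1 / q = 1) (g : Fin n → ℝ) :
    (∀ γ : Fin n → ℝ, ∑ i, γ i * g i ≤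
      ‖(WithLp.equiv p (Fin n → ℝ)).symm γ‖ * ‖(WithLp.equiv q (Fin n → ℝ)).symm g‖) ∧
    (∃ γ : Fin n → ℝ, ‖(WithLp.equiv p (Fin n → ℝ)).symm γ‖ ≤ 1 ∧
      ∑ i, γ i * g i = ‖(WithLp.equiv q (Fin n → ℝ)).symm g‖) := by
  haveI : Nonempty (Fin n) := Fin.pos_iff_nonempty.mp hn
  have hp1 : (1 : ℝ≥0∞) ≤ p := Fact.out
  have hq1 : (1 : ℝ≥0∞) ≤ q := Fact.out
  have hp0 : p ≠ 0 := (lt_of_lt_of_le zero_lt_one hp1).ne'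
  have hq0 : q ≠ 0 := (lt_of_lt_of_le zero_lt_one hq1).ne'
  rcases eq_or_ne p 1 with rfl | hp_ne1
  · -- p = 1, q = ∞
    have hq : q = ∞ := by
      have h0 : (1 : ℝ≥0∞) + 1/q = 1 + 0 := by simpa using hpq
      have := (ENNReal.add_right_inj (a := (1:ℝ≥0∞)) ENNReal.one_ne_top).mp h0
      simpa [ENNReal.div_eq_zero_iff] using this
    subst hq
    have hnorm1 : ∀ x : Fin n → ℝ, ‖(WithLp.equiv 1 (Fin n → ℝ)).symm x‖ = ∑ i, |x i| := by
      intro x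
      rw [PiLp.norm_eq_sum (by norm_num : (0:ℝ) < (1:ℝ≥0∞).toReal)]
      simp [Real.norm_eq_abs]
    have hnormtop : ∀ x : Fin n → ℝ, ‖(WithLp.equiv ∞ (Fin n → ℝ)).symm x‖ = ‖x‖ :=
      fun x => PiLp.norm_toLp x
    have hcoord : ∀ (x : Fin n → ℝ) i, |x i| ≤ ‖(WithLp.equiv ∞ (Fin n → ℝ)).symm x‖ := by
      intro x i
      rw [hnormtop]
      exact norm_le_pi_norm x i
    constructor
    · intro γ
      rw [hnorm1, Finset.sum_mul]
      refine Finset.sum_le_sum fun i _ => ?_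
      calc γ i * g i ≤ |γ i * g i| := le_abs_self _
        _ = |γ i| * |g i| := abs_mul _ _
        _ ≤ |γ i| * ‖(WithLp.equiv ∞ (Fin n → ℝ)).symm g‖ := by
            exact mul_le_mul_of_nonneg_left (hcoord g i) (abs_nonneg _)
    · -- extremizer : Pi.single at argmax
      obtain ⟨i0, -, hmax⟩ := Finset.exists_mem_eq_sup Finset.univ Finset.univ_nonempty
        (fun i => ‖g i‖₊)
      have hN : ‖(WithLp.equiv ∞ (Fin n → ℝ)).symm g‖ = |g i0| := by
        rw [hnormtop, Pi.norm_def, hmax]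
        simp [Real.norm_eq_abs]
      refine ⟨Pi.single i0 (Real.sign (g i0)), ?_, ?_⟩
      · rw [hnorm1]
        rw [Finset.sum_eq_single_of_mem i0 (Finset.mem_univ i0)
          (fun i _ h => by simp [Pi.single_eq_of_ne h])]
        simpa using abs_sign_le (g i0)
      · rw [hN]
        rw [Finset.sum_eq_single_of_mem i0 (Finset.mem_univ i0)
          (fun i _ h => by simp [Pi.single_eq_of_ne h])]
        simp [sign_mul_self]
  · rcases eq_or_ne p ∞ with rfl | hp_netop
    · -- p = ∞, q = 1
      have hq : q = 1 := by
        have h0 : 1/q = 1 := by simpa using hpq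
        rw [one_div] at h0
        exact ENNReal.inv_eq_one.mp h0
      subst hq
      have hnorm1 : ∀ x : Fin n → ℝ, ‖(WithLp.equiv 1 (Fin n → ℝ)).symm x‖ = ∑ i, |x i| := by
        intro x
        rw [PiLp.norm_eq_sum (by norm_num : (0:ℝ) < (1:ℝ≥0∞).toReal)]
        simp [Real.norm_eq_abs]
      have hnormtop : ∀ x : Fin n → ℝ, ‖(WithLp.equiv ∞ (Fin n → ℝ)).symm x‖ = ‖x‖ :=
        fun x => PiLp.norm_toLp x
      constructor
      · intro γ
        rw [hnorm1, Finset.mul_sum]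
        refine Finset.sum_le_sum fun i _ => ?_
        calc γ i * g i ≤ |γ i| * |g i| := by rw [← abs_mul]; exact le_abs_self _
          _ ≤ ‖(WithLp.equiv ∞ (Fin n → ℝ)).symm γ‖ * |g i| := by
              refine mul_le_mul_of_nonneg_right ?_ (abs_nonneg _)
              rw [hnormtop]; exact norm_le_pi_norm γ i
      · refine ⟨fun i => Real.sign (g i), ?_, ?_⟩
        · rw [hnormtop]
          refine (pi_norm_le_iff_of_nonneg zero_le_one).mpr fun i => ?_
          exact abs_sign_le _
        · rw [hnorm1]
          exact Finset.sum_congr rfl fun i _ => sign_mul_self _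
    · -- 1 < p < ∞, real conjugate exponents
      have hp_lt : 1 < p := lt_of_le_of_ne hp1 (Ne.symm hp_ne1)
      have hq_netop : q ≠ ∞ := by
        rintro rfl
        apply hp_ne1
        have h0 : 1/p = 1 := by simpa using hpq
        rw [one_div] at h0
        have := ENNReal.inv_eq_one.mp h0
        exact this
      have hpt1 : 1 < p.toReal := by
        rw [← ENNReal.toReal_one]
        exact (ENNReal.toReal_lt_toReal ENNReal.one_ne_top hp_netop).mpr hp_lt
      have hsum : p.toReal⁻¹ + q.toReal⁻¹ = 1 := by
        have h := congrArg ENNReal.toReal hpq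
        rw [ENNReal.toReal_add, ENNReal.toReal_one] at h
        · simpa [ENNReal.toReal_div] using h
        · simp [ENNReal.div_eq_top, hp0]
        · simp [ENNReal.div_eq_top, hq0]
      have hconj : Real.HolderConjugate p.toReal q.toReal := Real.holderConjugate_iff.mpr ⟨hpt1, hsum⟩
      have hpt0 : (0:ℝ) < p.toReal := lt_trans zero_lt_one hpt1
      have hqt0 : (0:ℝ) < q.toReal := lt_trans zero_lt_one (Real.holderConjugate_iff.mp hconj.symm).1
      have hnp : ∀ x : Fin n → ℝ, ‖(WithLp.equiv p (Fin n → ℝ)).symm x‖ =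
          (∑ i, |x i| ^ p.toReal) ^ (1/p.toReal) := by
        intro x
        rw [PiLp.norm_eq_sum hpt0]
        simp [Real.norm_eq_abs]
      have hnq : ∀ x : Fin n → ℝ, ‖(WithLp.equiv q (Fin n → ℝ)).symm x‖ =
          (∑ i, |x i| ^ q.toReal) ^ (1/q.toReal) := by
        intro x
        rw [PiLp.norm_eq_sum hqt0]
        simp [Real.norm_eq_abs]
      constructor
      · intro γ
        rw [hnp, hnq]
        exact Real.inner_le_Lp_mul_Lq Finset.univ γ g hconj
      · obtain ⟨⟨γ', hγ'le, hγ'eq⟩, -⟩ :=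
          NNReal.isGreatest_Lp (s := Finset.univ) (fun i => ‖g i‖₊) hconj.symm
        simp only [Set.mem_setOf_eq] at hγ'le
        refine ⟨fun i => Real.sign (g i) * (γ' i : ℝ), ?_, ?_⟩
        · rw [hnp]
          have h1 : ∀ i, |Real.sign (g i) * (γ' i : ℝ)| ≤ (γ' i : ℝ) := by
            intro i
            rw [abs_mul, abs_of_nonneg (NNReal.coe_nonneg (γ' i))]
            exact mul_le_of_le_one_left (NNReal.coe_nonneg (γ' i)) (abs_sign_le _)
          have h2 : (∑ i, |Real.sign (g i) * (γ' i : ℝ)| ^ p.toReal)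
              ≤ ∑ i, (γ' i : ℝ) ^ p.toReal :=
            Finset.sum_le_sum fun i _ =>
              Real.rpow_le_rpow (abs_nonneg _) (h1 i) hpt0.le
          have h3 : (∑ i, (γ' i : ℝ) ^ p.toReal) ≤ 1 := by
            exact_mod_cast hγ'le
          refine Real.rpow_le_one (Finset.sum_nonneg fun i _ => Real.rpow_nonneg (abs_nonneg _) _)
            (h2.trans h3) (by positivity)
        · rw [hnq]
          have hs : ∑ i, (Real.sign (g i) * (γ' i : ℝ)) * g i = ∑ i, |g i| * (γ' i : ℝ) :=
            Finset.sum_congr rfl fun i _ => by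
              rw [mul_comm (Real.sign (g i)) ((γ' i : ℝ)), mul_assoc, sign_mul_self,
                mul_comm]
          rw [hs]
          have h4 := congrArg NNReal.toReal hγ'eq
          push_cast at h4
          simpa [Real.norm_eq_abs] using h4

lemma pi_eq_sum_single {n : ℕ} (x : Fin n → ℝ) :
    x = ∑ i, Pi.single i (x i) := by
  funext j
  rw [Finset.sum_apply]
  simp [Finset.sum_pi_single]

end AdaptiveAux

set_option maxHeartbeats 1000000 in
open AdaptiveAux in
theorem worst_case_adaptive_sharpness_first_order
    (n : ℕ) (hn : 1 ≤ n) (L : (Fin n → ℝ) → ℝ) (hL : ContDiff ℝ 3 L)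
    (w : Fin n → ℝ)
    (p q : ℝ≥0∞) [Fact (1 ≤ p)] [Fact (1 ≤ q)] (hpq : 1 / p + 1 / q = 1)
    (hg : (fun i => fderiv ℝ L w (Pi.single i 1) * |w i|) ≠ (0 : Fin n → ℝ)) :
    Tendsto (fun ρ : ℝ => (1 / ρ) *
        sSup {s : ℝ | ∃ γ : Fin n → ℝ,
          ‖(WithLp.equiv p (Fin n → ℝ)).symm γ‖ ≤ ρ ∧
          s = L (w + fun i => γ i * |w i|) - L w})
      (nhdsWithin 0 (Set.Ioi 0))
      (nhds ‖(WithLp.equiv q (Fin n → ℝ)).symm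
        (fun i => fderiv ℝ L w (Pi.single i 1) * |w i|)‖) := by
  classical
  set g : Fin n → ℝ := fun i => fderiv ℝ L w (Pi.single i 1) * |w i| with hgdef
  set N : ℝ := ‖(WithLp.equiv q (Fin n → ℝ)).symm g‖ with hNdef
  have hN0 : 0 ≤ N := norm_nonneg _
  obtain ⟨hupper, γs, hγs_norm, hγs_eq⟩ := holder_pair n hn p q hpq g
  -- the rescaling map and the derivative functional
  set D : (Fin n → ℝ) →L[ℝ] ℝ := fderiv ℝ L w with hDdef
  set M : (Fin n → ℝ) →L[ℝ] (Fin n → ℝ) :=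
    ContinuousLinearMap.pi (fun i => |w i| • ContinuousLinearMap.proj i) with hMdef
  set T : PiLp p (fun _ : Fin n => ℝ) →L[ℝ] (Fin n → ℝ) :=
    M.comp (PiLp.continuousLinearEquiv p ℝ (fun _ : Fin n => ℝ)).toContinuousLinearMap
    with hTdef
  have hTval : ∀ γ : Fin n → ℝ,
      T ((WithLp.equiv p (Fin n → ℝ)).symm γ) = fun i => γ i * |w i| := by
    intro γ
    funext i
    simp only [hTdef, hMdef, ContinuousLinearMap.comp_apply, ContinuousLinearEquiv.coe_coe,
      PiLp.continuousLinearEquiv_apply, Equiv.apply_symm_apply, ContinuousLinearMap.pi_apply,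
      ContinuousLinearMap.smul_apply, ContinuousLinearMap.proj_apply, smul_eq_mul]
    exact mul_comm _ _
  set F : PiLp p (fun _ : Fin n => ℝ) → ℝ := fun δ => L (w + T δ) with hFdef
  have hFval : ∀ γ : Fin n → ℝ,
      (L (w + fun i => γ i * |w i|)) = F ((WithLp.equiv p (Fin n → ℝ)).symm γ) := by
    intro γ
    rw [hFdef]
    simp only [hTval]
  -- derivative of F at 0
  have hLd : DifferentiableAt ℝ L w := (hL.differentiable (by norm_num)).differentiableAt
  have hT0 : T (0 : PiLp p (fun _ : Fin n => ℝ)) = 0 := map_zero T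
  have hF0 : F 0 = L w := by rw [hFdef]; simp [hT0]
  have hinner : HasFDerivAt (fun δ : PiLp p (fun _ : Fin n => ℝ) => w + T δ) T 0 :=
    (T.hasFDerivAt (x := 0)).const_add w
  have hLw : HasFDerivAt L D ((fun δ : PiLp p (fun _ : Fin n => ℝ) => w + T δ) 0) := by
    simp only [hT0, add_zero]
    exact hLd.hasFDerivAt
  have hF : HasFDerivAt F (D.comp T) 0 := hLw.comp 0 hinner
  -- the derivative functional in coordinates
  have hDx : ∀ x : Fin n → ℝ, D x = ∑ i, x i * D (Pi.single i 1) := by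
    intro x
    conv_lhs => rw [pi_eq_sum_single x]
    rw [map_sum]
    refine Finset.sum_congr rfl fun i _ => ?_
    have h1 : Pi.single i (x i) = x i • (Pi.single i (1 : ℝ) : Fin n → ℝ) := by
      funext j
      rcases eq_or_ne j i with rfl | hji
      · simp
      · simp [Pi.single_eq_of_ne hji]
    rw [h1, map_smul, smul_eq_mul]
  have hφ : ∀ γ : Fin n → ℝ,
      (D.comp T) ((WithLp.equiv p (Fin n → ℝ)).symm γ) = ∑ i, γ i * g i := by
    intro γ
    rw [ContinuousLinearMap.comp_apply, hTval, hDx]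
    refine Finset.sum_congr rfl fun i _ => ?_
    rw [hgdef]
    ring
  -- little-o estimate
  have hlo : (fun δ : PiLp p (fun _ : Fin n => ℝ) => F δ - L w - (D.comp T) δ)
      =o[nhds 0] (fun δ : PiLp p (fun _ : Fin n => ℝ) => δ) := by
    have h := hasFDerivAt_iff_isLittleO_nhds_zero.mp hF
    simpa [hF0] using h
  rw [Metric.tendsto_nhdsWithin_nhds]
  intro ε hε
  have hev := (Asymptotics.isLittleO_iff.mp hlo) (show (0:ℝ) < ε/2 by linarith)
  rw [Metric.eventually_nhds_iff] at hev
  obtain ⟨δ0, hδ0, hr⟩ := hev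
  refine ⟨δ0, hδ0, ?_⟩
  intro ρ hρmem hρdist
  have hρ : 0 < ρ := hρmem
  have hρδ : ρ < δ0 := by
    rw [Real.dist_eq, sub_zero, abs_of_pos hρ] at hρdist
    exact hρdist
  have hrbound : ∀ δ : PiLp p (fun _ : Fin n => ℝ), ‖δ‖ ≤ ρ →
      |F δ - L w - (D.comp T) δ| ≤ ε/2 * ρ := by
    intro δ hδ
    have h1 : dist δ 0 < δ0 := by
      rw [dist_zero_right]
      exact lt_of_le_of_lt hδ hρδ
    have h2 := hr h1
    simp only [Real.norm_eq_abs] at h2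
    calc |F δ - L w - (D.comp T) δ| ≤ ε/2 * ‖δ‖ := by simpa using h2
      _ ≤ ε/2 * ρ := by nlinarith
  set A : Set ℝ := {s : ℝ | ∃ γ : Fin n → ℝ,
      ‖(WithLp.equiv p (Fin n → ℝ)).symm γ‖ ≤ ρ ∧
      s = L (w + fun i => γ i * |w i|) - L w} with hAdef
  have hmem_bound : ∀ s ∈ A, s ≤ ρ * N + ε/2 * ρ := by
    rintro s ⟨γ, hγ, rfl⟩
    rw [hFval γ]
    set δ := (WithLp.equiv p (Fin n → ℝ)).symm γ
    have h1 : (D.comp T) δ ≤ ρ * N := by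
      rw [hφ γ]
      calc ∑ i, γ i * g i ≤ ‖δ‖ * N := hupper γ
        _ ≤ ρ * N := mul_le_mul_of_nonneg_right hγ hN0
    have h2 := hrbound δ hγ
    have h3 : F δ - L w - (D.comp T) δ ≤ ε/2 * ρ := (abs_le.mp h2).2
    linarith
  have hAne : A.Nonempty := by
    refine ⟨L (w + fun i => (0:ℝ) * |w i|) - L w, 0, ?_, rfl⟩
    simp only [show (WithLp.equiv p (Fin n → ℝ)).symm 0 = 0 from rfl, norm_zero]
    exact hρ.le
  have hAbdd : BddAbove A := ⟨ρ * N + ε/2 * ρ, fun s hs => hmem_bound s hs⟩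
  have hsup_le : sSup A ≤ ρ * N + ε/2 * ρ := Real.sSup_le hmem_bound (by nlinarith)
  have hsup_ge : ρ * N - ε/2 * ρ ≤ sSup A := by
    have hmem : (L (w + fun i => (ρ • γs) i * |w i|) - L w) ∈ A := by
      refine ⟨ρ • γs, ?_, rfl⟩
      rw [show (WithLp.equiv p (Fin n → ℝ)).symm (ρ • γs) = ρ • (WithLp.equiv p (Fin n → ℝ)).symm γs from rfl, norm_smul, Real.norm_eq_abs, abs_of_pos hρ]
      calc ρ * ‖(WithLp.equiv p (Fin n → ℝ)).symm γs‖ ≤ ρ * 1 :=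
        mul_le_mul_of_nonneg_left hγs_norm hρ.le
        _ = ρ := mul_one ρ
    have hval : ρ * N - ε/2 * ρ ≤ L (w + fun i => (ρ • γs) i * |w i|) - L w := by
      rw [hFval (ρ • γs)]
      set δ := (WithLp.equiv p (Fin n → ℝ)).symm (ρ • γs)
      have hδρ : ‖δ‖ ≤ ρ := by
        rw [show δ = (WithLp.equiv p (Fin n → ℝ)).symm (ρ • γs) from rfl,
          show (WithLp.equiv p (Fin n → ℝ)).symm (ρ • γs) = ρ • (WithLp.equiv p (Fin n → ℝ)).symm γs from rfl, norm_smul, Real.norm_eq_abs, abs_of_pos hρ]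
        calc ρ * ‖(WithLp.equiv p (Fin n → ℝ)).symm γs‖ ≤ ρ * 1 :=
          mul_le_mul_of_nonneg_left hγs_norm hρ.le
          _ = ρ := mul_one ρ
      have h1 : (D.comp T) δ = ρ * N := by
        rw [hφ (ρ • γs)]
        have hms : ∑ i, (ρ • γs) i * g i = ρ * ∑ i, γs i * g i := by
          rw [Finset.mul_sum]
          exact Finset.sum_congr rfl fun i _ => by simp [mul_assoc]
        rw [hms, hγs_eq, ← hNdef]
      have h2 := hrbound δ hδρ
      have h3 : -(ε/2 * ρ) ≤ F δ - L w - (D.comp T) δ := neg_le_of_abs_le h2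
      linarith
    exact le_trans hval (le_csSup hAbdd hmem)
  rw [Real.dist_eq, abs_sub_lt_iff]
  have hd1 : 1/ρ * sSup A ≤ N + ε/2 := by
    rw [one_div, ← div_eq_inv_mul, div_le_iff₀ hρ]
    nlinarith
  have hd2 : N - ε/2 ≤ 1/ρ * sSup A := by
    rw [one_div, ← div_eq_inv_mul, le_div_iff₀ hρ]
    nlinarith
  constructor <;> linarith
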